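/- arXiv:1602.02646 — 2 statements merged into one kernel-verified Lean document; each statement's English description precedes it below -/
import Mathlib

section
/- Let A be a real symmetric n×n matrix and B a real symmetric n×n matrix, and suppose A - B and A + B are both positive definite. Then every eigenvalue of F₁ = [[A, B], [-B, -A]] is real and nonzero. -/
open Matrix

lemma quad_key {n : ℕ} {M : Matrix (Fin n) (Fin n) ℝ} (hM : M.PosDef) (z : Fin n → ℂ)
    (hz : z ≠ 0) :
    ∃ c : ℝ, 0 < c ∧ star z ⬝ᵥ ((M.map Complex.ofReal) *ᵥ z) = (c : ℂ) := by
  set x : Fin n → ℝ := fun i => (z i).re with hx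
  set y : Fin n → ℝ := fun i => (z i).im with hy
  have hsym : ∀ i j, M i j = M j i := by
    intro i j
    have h := hM.isHermitian
    calc M i j = Mᴴ i j := by rw [h]
    _ = M j i := by simp [conjTranspose_apply]
  have expand : star z ⬝ᵥ ((M.map Complex.ofReal) *ᵥ z)
      = ∑ i, ∑ j, (starRingEnd ℂ) (z i) * ((M i j : ℂ) * z j) := by
    simp [dotProduct, mulVec, Finset.mul_sum, Matrix.map_apply]
  have hexpr : star z ⬝ᵥ ((M.map Complex.ofReal) *ᵥ z)
      = Complex.ofReal (x ⬝ᵥ (M *ᵥ x) + y ⬝ᵥ (M *ᵥ y)) := by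
    rw [expand]
    apply Complex.ext
    · simp only [Complex.re_sum, Complex.ofReal_re, Complex.ofReal_add, Complex.add_re]
      simp only [dotProduct, mulVec, Finset.mul_sum]
      rw [← Finset.sum_add_distrib]
      refine Finset.sum_congr rfl fun i _ => ?_
      rw [← Finset.sum_add_distrib]
      refine Finset.sum_congr rfl fun j _ => ?_
      simp [Complex.mul_re, hx, hy]
    · simp only [Complex.im_sum, Complex.ofReal_im]
      calc (∑ i, ∑ j, ((starRingEnd ℂ) (z i) * ((M i j : ℂ) * z j)).im)
          = ∑ i, ∑ j, ((z i).re * M i j * (z j).im - (z i).im * M i j * (z j).re) := by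
            refine Finset.sum_congr rfl fun i _ => Finset.sum_congr rfl fun j _ => ?_
            simp [Complex.mul_im]; ring
        _ = (∑ i, ∑ j, (z i).re * M i j * (z j).im)
            - (∑ i, ∑ j, (z i).im * M i j * (z j).re) := by
            simp [Finset.sum_sub_distrib]
        _ = 0 := by
            rw [sub_eq_zero, Finset.sum_comm]
            refine Finset.sum_congr rfl fun i _ => Finset.sum_congr rfl fun j _ => ?_
            rw [hsym j i]; ring
  refine ⟨x ⬝ᵥ (M *ᵥ x) + y ⬝ᵥ (M *ᵥ y), ?_, hexpr⟩
  have hxy : x ≠ 0 ∨ y ≠ 0 := by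
    by_contra h
    push_neg at h
    apply hz
    funext i
    have h1 := congrFun h.1 i
    have h2 := congrFun h.2 i
    simp [hx, hy] at h1 h2
    exact Complex.ext h1 h2
  have hpos : ∀ w : Fin n → ℝ, 0 ≤ w ⬝ᵥ (M *ᵥ w) := by
    intro w
    have := hM.posSemidef.dotProduct_mulVec_nonneg w
    simpa using this
  have hposd : ∀ w : Fin n → ℝ, w ≠ 0 → 0 < w ⬝ᵥ (M *ᵥ w) := by
    intro w hw
    have := hM.dotProduct_mulVec_pos hw
    simpa using this
  rcases hxy with h | h
  · have := hposd x h; have := hpos y; linarith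
  · have := hposd y h; have := hpos x; linarith

/-- Real spectrum of the linear-response (BSE/RPA) matrix: if `A, B` are real symmetric
and `A - B`, `A + B` are positive definite, then every complex eigenvalue of
`F₁ = [[A, B], [-B, -A]]` is real and nonzero. -/
theorem bse_real_nonzero_spectrum {n : ℕ} (A B : Matrix (Fin n) (Fin n) ℝ)
    (hA : Aᵀ = A) (hB : Bᵀ = B)
    (hAmB : (A - B).PosDef) (hApB : (A + B).PosDef) :
    ∀ μ : ℂ, (∃ v : (Fin n ⊕ Fin n) → ℂ, v ≠ 0 ∧
        (fromBlocks A B (-B) (-A)).map (Complex.ofReal) *ᵥ v = μ • v) →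
      μ.im = 0 ∧ μ ≠ 0 := by
  intro μ ⟨v, hv, heig⟩
  set Ac := A.map Complex.ofReal with hAc
  set Bc := B.map Complex.ofReal with hBc
  set x : Fin n → ℂ := fun i => v (Sum.inl i) with hxdef
  set y : Fin n → ℂ := fun i => v (Sum.inr i) with hydef
  have hvxy : v = Sum.elim x y := by funext i; cases i <;> rfl
  have hmap : (fromBlocks A B (-B) (-A)).map (Complex.ofReal)
      = fromBlocks Ac Bc (-Bc) (-Ac) := by
    have hneg : ∀ M : Matrix (Fin n) (Fin n) ℝ,
        (-M).map Complex.ofReal = -(M.map Complex.ofReal) := by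
      intro M; funext i j; simp [Matrix.map_apply]
    rw [fromBlocks_map, hneg A, hneg B]
  rw [hmap, hvxy, fromBlocks_mulVec] at heig
  have e1 : Ac *ᵥ x + Bc *ᵥ y = μ • x := by
    funext i; have := congrFun heig (Sum.inl i); simpa using this
  have e2 : (-Bc) *ᵥ x + (-Ac) *ᵥ y = μ • y := by
    funext i; have := congrFun heig (Sum.inr i); simpa using this
  set u : Fin n → ℂ := x + y with hu
  set w : Fin n → ℂ := x - y with hw
  have hQmap : (A - B).map Complex.ofReal = Ac - Bc := by
    funext i j; simp [Matrix.map_apply, hAc, hBc]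
  have hPmap : (A + B).map Complex.ofReal = Ac + Bc := by
    funext i j; simp [Matrix.map_apply, hAc, hBc]
  have hQw : (A - B).map Complex.ofReal *ᵥ w = μ • u := by
    rw [hQmap]
    calc (Ac - Bc) *ᵥ (x - y)
        = (Ac *ᵥ x + Bc *ᵥ y) + ((-Bc) *ᵥ x + (-Ac) *ᵥ y) := by
          simp only [Matrix.sub_mulVec, Matrix.mulVec_sub, Matrix.neg_mulVec]
          abel
      _ = μ • x + μ • y := by rw [e1, e2]
      _ = μ • u := by rw [hu, smul_add]
  have hPu : (A + B).map Complex.ofReal *ᵥ u = μ • w := by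
    rw [hPmap]
    calc (Ac + Bc) *ᵥ (x + y)
        = (Ac *ᵥ x + Bc *ᵥ y) - ((-Bc) *ᵥ x + (-Ac) *ᵥ y) := by
          simp only [Matrix.add_mulVec, Matrix.mulVec_add, Matrix.neg_mulVec]
          abel
      _ = μ • x - μ • y := by rw [e1, e2]
      _ = μ • w := by rw [hw, smul_sub]
  have hune : u ≠ 0 := by
    intro hu0
    have hQw0 : (A - B).map Complex.ofReal *ᵥ w = 0 := by rw [hQw, hu0, smul_zero]
    have hw0 : w = 0 := by
      by_contra hwne
      obtain ⟨c, hc, hceq⟩ := quad_key hAmB w hwne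
      rw [hQw0, dotProduct_zero] at hceq
      exact hc.ne (by exact_mod_cast hceq)
    apply hv
    have hx0 : x = 0 := by
      funext i
      have h1 := congrFun hu0 i
      have h2 := congrFun hw0 i
      simp only [hu, hw, Pi.add_apply, Pi.sub_apply, Pi.zero_apply] at h1 h2
      have : (2 : ℂ) * x i = 0 := by linear_combination h1 + h2
      simpa using this
    have hy0 : y = 0 := by
      funext i
      have h1 := congrFun hu0 i
      have h2 := congrFun hx0 i
      simp only [hu, Pi.add_apply, Pi.zero_apply] at h1 h2
      simpa [h2] using h1
    rw [hvxy, hx0, hy0]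
    funext i; cases i <;> simp
  obtain ⟨s, hs, hseq⟩ := quad_key hApB u hune
  have hpne : (A + B).map Complex.ofReal *ᵥ u ≠ 0 := by
    intro h0
    rw [h0, dotProduct_zero] at hseq
    exact hs.ne (by exact_mod_cast hseq)
  obtain ⟨t, ht, hteq⟩ := quad_key hAmB ((A + B).map Complex.ofReal *ᵥ u) hpne
  have hQp : (A - B).map Complex.ofReal *ᵥ ((A + B).map Complex.ofReal *ᵥ u)
      = (μ * μ) • u := by
    rw [hPu, Matrix.mulVec_smul, hQw, smul_smul]
  rw [hQp] at hteq
  have hspu : star ((A + B).map Complex.ofReal *ᵥ u) ⬝ᵥ u = (s : ℂ) := by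
    have h1 : star (star u ⬝ᵥ ((A + B).map Complex.ofReal *ᵥ u))
        = star ((A + B).map Complex.ofReal *ᵥ u) ⬝ᵥ u := by
      simp [dotProduct, star_sum, star_mul', mul_comm]
    rw [← h1, hseq]
    simp
  rw [dotProduct_smul, hspu] at hteq
  have hsne : ((s : ℂ)) ≠ 0 := by exact_mod_cast hs.ne'
  have hmm : μ * μ = ((t / s : ℝ) : ℂ) := by
    push_cast
    field_simp at hteq ⊢
    linear_combination hteq
  have h1 : μ.re * μ.im + μ.im * μ.re = 0 := by
    have := congrArg Complex.im hmm
    simpa [Complex.mul_im] using this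
  have h2 : μ.re * μ.re - μ.im * μ.im = t / s := by
    have := congrArg Complex.re hmm
    simpa [Complex.mul_re] using this
  have hpos : 0 < t / s := div_pos ht hs
  have him : μ.im = 0 := by
    rcases mul_eq_zero.mp (by linarith : μ.re * μ.im = 0) with h | h
    · nlinarith
    · exact h
  refine ⟨him, ?_⟩
  intro h0
  rw [h0] at hmm
  simp only [mul_zero] at hmm
  have : t / s = 0 := by exact_mod_cast hmm.symm
  exact hpos.ne' this
end

section
/- Let A = D + P Qᵀ and B = Φ Ψᵀ with D an invertible n×n diagonal matrix and P, Q ∈ ℝ^{n×k}, Φ, Ψ ∈ ℝ^{n×m}. Then the Schur complement S = -Aᵀ + Bᵀ A⁻¹ B can be written as S = -(D + Q_S P_Sᵀ) where P_S = [P Ψ] ∈ ℝ^{n×(k+m)} and Q_S = [Q Ψ(Φᵀ D⁻¹ P K Qᵀ D⁻¹ Φ - Φᵀ D⁻¹ Φ)] with K = (I + Qᵀ D⁻¹ P)⁻¹, assuming I + Qᵀ D⁻¹ P is invertible. -/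
open Matrix

/-- Diagonal-plus-low-rank structure of the BSE Schur complement:
with `A = D + PQᵀ`, `B = ΦΨᵀ`, `D` invertible diagonal and `K = (I + Qᵀ D⁻¹ P)⁻¹`,
the Schur complement `S = -Aᵀ + Bᵀ A⁻¹ B` equals `-(D + Q_S P_Sᵀ)` where
`P_S = [P Ψ]` and `Q_S = [Q  Ψ(Φᵀ D⁻¹ P K Qᵀ D⁻¹ Φ - Φᵀ D⁻¹ Φ)]`. -/
theorem bse_schur_low_rank {n k m : ℕ}
    (D : Matrix (Fin n) (Fin n) ℝ)
    (P Q : Matrix (Fin n) (Fin k) ℝ) (Φ Ψ : Matrix (Fin n) (Fin m) ℝ)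
    (hD : D.IsDiag) (hDinv : IsUnit D.det)
    (hK : IsUnit (1 + Qᵀ * D⁻¹ * P).det) :
    -(D + P * Qᵀ)ᵀ + (Φ * Ψᵀ)ᵀ * (D + P * Qᵀ)⁻¹ * (Φ * Ψᵀ)
      = -(D +
          fromCols Q
            (Ψ * (Φᵀ * D⁻¹ * P * (1 + Qᵀ * D⁻¹ * P)⁻¹ * Qᵀ * D⁻¹ * Φ - Φᵀ * D⁻¹ * Φ)) *
          (fromCols P Ψ)ᵀ) := by
  have hDu : IsUnit D := (isUnit_iff_isUnit_det D).mpr hDinv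
  have hKu : IsUnit (1 + Qᵀ * D⁻¹ * P) := (isUnit_iff_isUnit_det _).mpr hK
  have hW : (D + P * Qᵀ)⁻¹ = D⁻¹ - D⁻¹ * P * (1 + Qᵀ * D⁻¹ * P)⁻¹ * Qᵀ * D⁻¹ := by
    have := add_mul_mul_inv_eq_sub D P (1 : Matrix (Fin k) (Fin k) ℝ) Qᵀ hDu isUnit_one
      (by rwa [inv_one])
    simpa only [Matrix.mul_one, inv_one] using this
  have hDsym : Dᵀ = D := hD.isSymm
  rw [hW, transpose_fromCols, fromCols_mul_fromRows, transpose_add, transpose_mul,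
    transpose_transpose, hDsym, transpose_mul, transpose_transpose]
  simp only [Matrix.mul_assoc, Matrix.add_mul, Matrix.mul_sub, Matrix.sub_mul, Matrix.mul_add, neg_add_rev, sub_eq_add_neg, Matrix.neg_mul, Matrix.mul_neg]
  abel
end
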